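/- Let 2 ≤ k < q, r = q − k, and u ∈ 𝔽_q^q. Then u is a deep hole of TRS_k(𝔽_q, θ) if and only if for every choice of r − 1 pairwise distinct elements β_1, …, β_{r-1} ∈ 𝔽_q, the r vectors c_{r,θ}(β_1), …, c_{r,θ}(β_{r-1}), H·u^T in 𝔽_q^r are linearly independent over 𝔽_q. -/

import Mathlib

set_option linter.unusedSectionVars false
set_option maxHeartbeats 1000000


open Polynomial Finset

/-- The set `S_{k,θ}` of twisted polynomials
`Σ_{i=0}^{k-2} f_i x^i + f_{k-1}(x^{k-1} + θ x^k)`. -/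
def Sset (F : Type*) [Field F] (k : ℕ) (θ : F) : Set (Polynomial F) :=
  {p | ∃ f : ℕ → F, p = (∑ i ∈ Finset.range (k - 1), Polynomial.C (f i) * Polynomial.X ^ i)
        + Polynomial.C (f (k - 1)) * (Polynomial.X ^ (k - 1) + Polynomial.C θ * Polynomial.X ^ k)}

/-- The twisted Reed–Solomon code `TRS_k(A, θ)` for the evaluation sequence `α`. -/
def TRS {F : Type*} [Field F] {n : ℕ} (α : Fin n → F) (k : ℕ) (θ : F) : Set (Fin n → F) :=
  {v | ∃ p ∈ Sset F k θ, v = fun j => p.eval (α j)}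

/-- The (Hamming) error distance `d(u, C)` from a word `u` to a code `C`. -/
noncomputable def distTo {F : Type*} [DecidableEq F] {n : ℕ} (u : Fin n → F)
    (C : Set (Fin n → F)) : ℕ :=
  sInf {d | ∃ c ∈ C, hammingDist u c = d}

/-- The covering radius `ρ(C) = max_u d(u, C)` of a code `C`. -/
noncomputable def covRad {F : Type*} [DecidableEq F] {n : ℕ} (C : Set (Fin n → F)) : ℕ :=
  sSup {d | ∃ u, distTo u C = d}

/-- `u` is a deep hole of `C` if `d(u, C) = ρ(C)`. -/
def IsDeepHole {F : Type*} [DecidableEq F] {n : ℕ} (C : Set (Fin n → F)) (u : Fin n → F) :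
    Prop :=
  distTo u C = covRad C

/-- The column vector `c_{r,θ}(a) = (1, a, …, a^{r-2}, a^{r-1} - θ a^r)ᵀ ∈ 𝔽_q^r`. -/
def crv (F : Type*) [Field F] (r : ℕ) (θ a : F) : Fin r → F :=
  fun i => if (i : ℕ) = r - 1 then a ^ (r - 1) - θ * a ^ r else a ^ (i : ℕ)

/-- The parity-check matrix `H` whose `j`-th column is `c_{r,θ}(α_j)`. -/
def Hmat {F : Type*} [Field F] {n : ℕ} (r : ℕ) (θ : F) (α : Fin n → F) :
    Matrix (Fin r) (Fin n) F :=
  Matrix.of fun i j => crv F r θ (α j) i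


section Helpers
variable {F : Type*} [Field F] [Fintype F] [DecidableEq F]

lemma sumPow_card_sub_one : ∑ a : F, a ^ (Fintype.card F - 1) = -1 := by
  have hq : 1 < Fintype.card F := Fintype.one_lt_card
  have h : ∀ a : F, a ^ (Fintype.card F - 1) = 1 - (if a = 0 then 1 else 0) := by
    intro a
    by_cases h0 : a = 0
    · simp [h0, zero_pow (by omega : Fintype.card F - 1 ≠ 0)]
    · simp [h0, FiniteField.pow_card_sub_one_eq_one a h0]
  rw [Finset.sum_congr rfl (fun a _ => h a), Finset.sum_sub_distrib]
  rw [Finset.sum_const, Finset.sum_ite_eq' Finset.univ (0 : F) (fun _ => 1)]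
  simp [Finset.card_univ, FiniteField.cast_card_eq_zero]

lemma sumPow_eq_zero {n : ℕ} (hn : n < 2 * (Fintype.card F - 1))
    (hne : n ≠ Fintype.card F - 1) : ∑ a : F, a ^ n = 0 := by
  rcases lt_or_gt_of_ne hne with h | h
  · exact FiniteField.sum_pow_lt_card_sub_one F n h
  · have hq : 1 < Fintype.card F := Fintype.one_lt_card
    have key : ∀ a : F, a ^ n = a ^ (n - (Fintype.card F - 1)) := by
      intro a
      by_cases h0 : a = 0
      · rw [h0, zero_pow (by omega : n ≠ 0), zero_pow (by omega : n - (Fintype.card F - 1) ≠ 0)]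
      · calc a ^ n = a ^ ((Fintype.card F - 1) + (n - (Fintype.card F - 1))) := by congr 1; omega
          _ = a ^ (Fintype.card F - 1) * a ^ (n - (Fintype.card F - 1)) := pow_add a _ _
          _ = a ^ (n - (Fintype.card F - 1)) := by
              rw [FiniteField.pow_card_sub_one_eq_one a h0, one_mul]
    rw [Finset.sum_congr rfl (fun a _ => key a)]
    exact FiniteField.sum_pow_lt_card_sub_one F _ (by omega)

lemma sumPow_mul_eval {p : F[X]} (hp : p.natDegree ≤ Fintype.card F - 1) {i : ℕ}
    (hi : i ≤ Fintype.card F - 2) :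
    ∑ a : F, a ^ i * p.eval a = - p.coeff (Fintype.card F - 1 - i) := by
  have hq : 1 < Fintype.card F := Fintype.one_lt_card
  have hdeg : p.natDegree < Fintype.card F := by omega
  have heval : ∀ a : F, a ^ i * p.eval a
      = ∑ m ∈ Finset.range (Fintype.card F), p.coeff m * a ^ (i + m) := by
    intro a
    rw [Polynomial.eval_eq_sum_range' hdeg, Finset.mul_sum]
    refine Finset.sum_congr rfl fun m _ => ?_
    rw [pow_add]; ring
  rw [Finset.sum_congr rfl (fun a _ => heval a), Finset.sum_comm]
  have hterm : ∀ m ∈ Finset.range (Fintype.card F),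
      (∑ a : F, p.coeff m * a ^ (i + m))
        = if m = Fintype.card F - 1 - i then - p.coeff (Fintype.card F - 1 - i) else 0 := by
    intro m hm
    rw [Finset.mem_range] at hm
    rw [← Finset.mul_sum]
    by_cases hcase : i + m = Fintype.card F - 1
    · have hmeq : m = Fintype.card F - 1 - i := by omega
      rw [if_pos hmeq, hmeq,
        show i + (Fintype.card F - 1 - i) = Fintype.card F - 1 from by omega,
        sumPow_card_sub_one, mul_neg_one]
    · rw [if_neg (by omega), sumPow_eq_zero (by omega) hcase, mul_zero]
  rw [Finset.sum_congr rfl hterm, Finset.sum_ite_eq' (Finset.range (Fintype.card F))]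
  rw [if_pos (Finset.mem_range.mpr (by omega))]

variable {F : Type*} [Field F] [Fintype F] [DecidableEq F]

lemma coeff_shape (k : ℕ) (θ : F) (f : ℕ → F) (m : ℕ) :
    ((∑ i ∈ Finset.range (k - 1), Polynomial.C (f i) * Polynomial.X ^ i)
        + Polynomial.C (f (k - 1)) * (Polynomial.X ^ (k - 1) + Polynomial.C θ * Polynomial.X ^ k)).coeff m
      = (if m < k - 1 then f m else 0)
        + f (k - 1) * ((if m = k - 1 then 1 else 0) + θ * (if m = k then 1 else 0)) := by
  rw [Polynomial.coeff_add]
  congr 1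
  · rw [Polynomial.finset_sum_coeff]
    have : ∀ i ∈ Finset.range (k-1), (Polynomial.C (f i) * Polynomial.X ^ i).coeff m
        = if i = m then f i else 0 := by
      intro i _
      rw [Polynomial.coeff_C_mul, Polynomial.coeff_X_pow]
      by_cases h : i = m
      · simp [h]
      · rw [if_neg (fun hh => h hh.symm), if_neg h, mul_zero]
    rw [Finset.sum_congr rfl this, Finset.sum_ite_eq' (Finset.range (k-1))]
    by_cases h : m < k - 1 <;> simp [h]
  · rw [Polynomial.coeff_C_mul, Polynomial.coeff_add, Polynomial.coeff_X_pow,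
      Polynomial.coeff_C_mul, Polynomial.coeff_X_pow]

lemma mem_Sset_iff {k : ℕ} (hk2 : 2 ≤ k) {θ : F} {p : Polynomial F} :
    p ∈ Sset F k θ ↔ (∀ m, k < m → p.coeff m = 0) ∧ p.coeff k = θ * p.coeff (k - 1) := by
  constructor
  · rintro ⟨f, rfl⟩
    constructor
    · intro m hm
      rw [coeff_shape]
      rw [if_neg (by omega), if_neg (by omega), if_neg (by omega)]
      ring
    · rw [coeff_shape, coeff_shape]
      rw [if_neg (show ¬ k < k - 1 by omega), if_neg (show ¬ k = k - 1 by omega), if_pos rfl,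
        if_neg (show ¬ k - 1 < k - 1 by omega), if_pos rfl, if_neg (show ¬ k - 1 = k by omega)]
      ring
  · rintro ⟨h1, h2⟩
    refine ⟨fun i => p.coeff i, ?_⟩
    ext m
    rw [coeff_shape]
    rcases lt_trichotomy m (k-1) with h | h | h
    · rw [if_pos h, if_neg (by omega), if_neg (by omega)]; ring
    · rw [if_neg (by omega), if_pos h, if_neg (by omega), h]; ring
    · rcases eq_or_lt_of_le (show k ≤ m by omega) with h' | h'
      · rw [if_neg (by omega), if_neg (by omega), if_pos h'.symm, ← h', h2]; ring
      · rw [if_neg (by omega), if_neg (by omega), if_neg (by omega), h1 m h']; ring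

lemma natDegree_le_of_mem_Sset {k : ℕ} (hk2 : 2 ≤ k) {θ : F} {p : Polynomial F}
    (hp : p ∈ Sset F k θ) : p.natDegree ≤ k :=
  Polynomial.natDegree_le_iff_coeff_eq_zero.mpr ((mem_Sset_iff hk2).mp hp).1

variable {F : Type*} [Field F] [Fintype F] [DecidableEq F]

lemma mulVec_Hmat_apply {n r : ℕ} (θ : F) (α : Fin n → F) (v : Fin n → F) (i : Fin r) :
    (Hmat r θ α).mulVec v i = ∑ j, crv F r θ (α j) i * v j := by
  simp [Hmat, Matrix.mulVec, dotProduct]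

lemma mulVec_Hmat_eq_sum {n r : ℕ} (θ : F) (α : Fin n → F) (v : Fin n → F) :
    (Hmat r θ α).mulVec v = ∑ j, v j • crv F r θ (α j) := by
  funext i
  rw [mulVec_Hmat_apply, Finset.sum_apply]
  exact Finset.sum_congr rfl fun j _ => by rw [Pi.smul_apply, smul_eq_mul, mul_comm]

lemma vand_zero {m : ℕ} {γ : Fin m → F} (hγ : Function.Injective γ) {g : Fin m → F}
    (h : ∀ i : Fin m, ∑ t, g t * γ t ^ (i : ℕ) = 0) : g = 0 := by
  have hdet : IsUnit (Matrix.vandermonde γ).det := by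
    rw [isUnit_iff_ne_zero]
    exact Matrix.det_vandermonde_ne_zero_iff.mpr hγ
  have hvm : Matrix.vecMul g (Matrix.vandermonde γ) = 0 := by
    funext i
    rw [Matrix.vecMul, Pi.zero_apply]
    simpa [dotProduct, Matrix.vandermonde] using h i
  have := congrArg (fun w => Matrix.vecMul w (Matrix.vandermonde γ)⁻¹) hvm
  simpa [Matrix.vecMul_vecMul, Matrix.mul_nonsing_inv _ hdet] using this

lemma eq_zero_of_small_support {n m : ℕ} {α : Fin n → F} (hα : Function.Injective α)
    {e : Fin n → F} (hwt : hammingNorm e ≤ m)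
    (h : ∀ i : ℕ, i < m → ∑ j, e j * α j ^ i = 0) : e = 0 := by
  classical
  set T : Finset (Fin n) := Finset.univ.filter (fun j => e j ≠ 0) with hT
  have hcard : T.card ≤ m := by
    have : T.card = hammingNorm e := rfl
    omega
  set γ : Fin T.card → F := fun t => α ((T.equivFin).symm t) with hγdef
  have hγ : Function.Injective γ :=
    hα.comp (Subtype.val_injective.comp (T.equivFin).symm.injective)
  set g : Fin T.card → F := fun t => e ((T.equivFin).symm t) with hgdef
  have hg : g = 0 := by
    apply vand_zero hγ
    intro i
    have : ∑ t, g t * γ t ^ (i : ℕ) = ∑ j ∈ T, e j * α j ^ (i : ℕ) := by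
      rw [← Finset.sum_coe_sort T (fun j => e j * α j ^ (i : ℕ))]
      exact Fintype.sum_equiv T.equivFin.symm _ _ (fun t => rfl)
    rw [this, Finset.sum_subset (Finset.subset_univ T)]
    · exact h i (lt_of_lt_of_le i.2 hcard)
    · intro j _ hj
      have : e j = 0 := by
        by_contra hc
        exact hj (Finset.mem_filter.mpr ⟨Finset.mem_univ j, hc⟩)
      rw [this, zero_mul]
  funext j
  by_cases hj : e j = 0
  · exact hj
  · have hjT : j ∈ T := Finset.mem_filter.mpr ⟨Finset.mem_univ j, hj⟩
    have := congrFun hg (T.equivFin ⟨j, hjT⟩)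
    simpa [hgdef] using this

lemma syndrome_eval {q k : ℕ} (hq : q = Fintype.card F) (hk2 : 2 ≤ k) (hkq : k < q)
    (θ : F) {α : Fin q → F} (hα : Function.Bijective α) {p : Polynomial F}
    (hp : p.natDegree ≤ q - 1) (i : Fin (q - k)) :
    (Hmat (q - k) θ α).mulVec (fun j => p.eval (α j)) i =
      if (i : ℕ) = q - k - 1 then -(p.coeff k - θ * p.coeff (k - 1))
      else - p.coeff (q - 1 - (i : ℕ)) := by
  have hq2 : 2 ≤ q := by omega
  have hik : (i : ℕ) < q - k := i.2
  rw [mulVec_Hmat_apply]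
  have hre : ∑ j, crv F (q - k) θ (α j) i * p.eval (α j)
      = ∑ a : F, crv F (q - k) θ a i * p.eval a :=
    Equiv.sum_comp (Equiv.ofBijective α hα) (fun a => crv F (q - k) θ a i * p.eval a)
  rw [hre]
  by_cases hi : (i : ℕ) = q - k - 1
  · rw [if_pos hi]
    have hcrv : ∀ a : F, crv F (q - k) θ a i * p.eval a
        = a ^ (q - k - 1) * p.eval a - θ * (a ^ (q - k) * p.eval a) := by
      intro a; rw [crv, if_pos hi]; ring
    rw [Finset.sum_congr rfl (fun a _ => hcrv a), Finset.sum_sub_distrib, ← Finset.mul_sum]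
    rw [sumPow_mul_eval (by omega) (by omega), sumPow_mul_eval (by omega) (by omega)]
    rw [show Fintype.card F - 1 - (q - k - 1) = k from by omega,
      show Fintype.card F - 1 - (q - k) = k - 1 from by omega]
    ring
  · rw [if_neg hi]
    have hcrv : ∀ a : F, crv F (q - k) θ a i * p.eval a = a ^ (i : ℕ) * p.eval a := by
      intro a; rw [crv, if_neg hi]
    rw [Finset.sum_congr rfl (fun a _ => hcrv a), sumPow_mul_eval (by omega) (by omega)]
    rw [show Fintype.card F - 1 - (i : ℕ) = q - 1 - (i : ℕ) from by omega]

lemma mem_TRS_iff {q k : ℕ} (hq : q = Fintype.card F) (hk2 : 2 ≤ k) (hkq : k < q)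
    (θ : F) {α : Fin q → F} (hα : Function.Bijective α) (v : Fin q → F) :
    v ∈ TRS α k θ ↔ (Hmat (q - k) θ α).mulVec v = 0 := by
  constructor
  · rintro ⟨p, hp, rfl⟩
    have hco := (mem_Sset_iff hk2).mp hp
    have hdeg : p.natDegree ≤ q - 1 := le_trans (natDegree_le_of_mem_Sset hk2 hp) (by omega)
    funext i
    rw [syndrome_eval hq hk2 hkq θ hα hdeg i, Pi.zero_apply]
    by_cases hi : (i : ℕ) = q - k - 1
    · rw [if_pos hi, hco.2]; ring
    · rw [if_neg hi, hco.1 (q - 1 - (i : ℕ)) (by have := i.2; omega), neg_zero]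
  · intro hv
    have hinj : Set.InjOn α ↑(Finset.univ : Finset (Fin q)) := fun a _ b _ h => hα.1 h
    set p : Polynomial F := Lagrange.interpolate Finset.univ α v with hpdef
    have heval : ∀ j, p.eval (α j) = v j := fun j =>
      Lagrange.eval_interpolate_at_node v hinj (Finset.mem_univ j)
    have hdeg : p.natDegree ≤ q - 1 := by
      by_cases h0 : p = 0
      · rw [h0]; simp
      · have := Lagrange.degree_interpolate_lt v hinj
        rw [← hpdef] at this
        have := (Polynomial.natDegree_lt_iff_degree_lt h0).mpr
          (by simpa [Finset.card_univ] using this)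
        omega
    have hveq : v = fun j => p.eval (α j) := funext fun j => (heval j).symm
    refine ⟨p, ?_, hveq⟩
    have hsyn : ∀ i : Fin (q - k), (Hmat (q - k) θ α).mulVec v i = 0 := fun i => by
      rw [hv]; rfl
    rw [mem_Sset_iff hk2]
    constructor
    · intro m hm
      by_cases hmq : q - 1 < m
      · exact Polynomial.coeff_eq_zero_of_natDegree_lt (by omega)
      · have hilt : q - 1 - m < q - k := by omega
        have := hsyn ⟨q - 1 - m, hilt⟩
        rw [hveq, syndrome_eval hq hk2 hkq θ hα hdeg] at this
        rw [if_neg (by simp only; omega)] at this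
        have : p.coeff (q - 1 - (q - 1 - m)) = 0 := by
          rw [← neg_eq_zero]; simpa using this
        rwa [show q - 1 - (q - 1 - m) = m from by omega] at this
    · have hlt : q - k - 1 < q - k := by omega
      have := hsyn ⟨q - k - 1, hlt⟩
      rw [hveq, syndrome_eval hq hk2 hkq θ hα hdeg, if_pos rfl] at this
      have h2 : p.coeff k - θ * p.coeff (k - 1) = 0 := by
        rw [← neg_eq_zero]; simpa using this
      linear_combination h2
lemma exists_small_preimage {n r : ℕ} (θ : F) (α : Fin n → F) (u : Fin n → F) :
    ∃ e : Fin n → F, (Hmat r θ α).mulVec e = (Hmat r θ α).mulVec u ∧ hammingNorm e ≤ r := by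
  classical
  set H := Hmat r θ α with hH
  set S : Set ℕ := {d | ∃ e : Fin n → F, H.mulVec e = H.mulVec u ∧ hammingNorm e = d} with hS
  have hne : S.Nonempty := ⟨hammingNorm u, u, rfl, rfl⟩
  obtain ⟨e₀, hHe₀, hwt₀⟩ : sInf S ∈ S := Nat.sInf_mem hne
  refine ⟨e₀, hHe₀, ?_⟩
  rw [hwt₀]
  by_contra hlt
  push_neg at hlt
  set T : Finset (Fin n) := Finset.univ.filter (fun j => e₀ j ≠ 0) with hT
  have hTcard : T.card = hammingNorm e₀ := rfl
  obtain ⟨T', -, hT'T, hT'card⟩ :=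
    Finset.exists_subsuperset_card_eq (Finset.empty_subset T) (by simp)
      (show r + 1 ≤ T.card by omega)
  have hnli : ¬ LinearIndependent F (fun t : ↑T' => crv F r θ (α ↑t)) := by
    intro hli
    have := hli.fintype_card_le_finrank
    rw [Module.finrank_fintype_fun_eq_card, Fintype.card_fin, Fintype.card_coe, hT'card] at this
    omega
  obtain ⟨g, hg0, t₀, hgt₀⟩ := Fintype.not_linearIndependent_iff.mp hnli
  set d : Fin n → F := fun j => if h : j ∈ T' then g ⟨j, h⟩ else 0 with hd
  have hHd : H.mulVec d = 0 := by
    rw [hH, mulVec_Hmat_eq_sum]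
    rw [← Finset.sum_subset (Finset.subset_univ T')
      (fun j _ hj => by rw [hd]; simp only [dif_neg hj, zero_smul])]
    rw [← Finset.sum_coe_sort T' (fun j => d j • crv F r θ (α j))]
    rw [← hg0]
    exact Finset.sum_congr rfl fun t _ => by rw [hd]; simp only [dif_pos t.2]
  set e' : Fin n → F := e₀ - (e₀ ↑t₀ / g t₀) • d with he'
  have hHe' : H.mulVec e' = H.mulVec u := by
    rw [he', Matrix.mulVec_sub, Matrix.mulVec_smul, hHd, smul_zero, sub_zero, hHe₀]
  have hsupp : Finset.univ.filter (fun j => e' j ≠ 0) ⊆ T.erase ↑t₀ := by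
    intro j hj
    rw [Finset.mem_filter] at hj
    rw [Finset.mem_erase]
    constructor
    · rintro rfl
      apply hj.2
      rw [he']
      simp only [Pi.sub_apply, Pi.smul_apply, smul_eq_mul, hd, dif_pos t₀.2, Subtype.coe_eta]
      field_simp
      ring
    · by_contra hjT
      apply hj.2
      have he₀j : e₀ j = 0 := by
        by_contra hc
        exact hjT (Finset.mem_filter.mpr ⟨Finset.mem_univ j, hc⟩)
      have hdj : d j = 0 := by
        rw [hd]
        exact dif_neg (fun hmem => hjT (hT'T hmem))
      rw [he']
      simp [he₀j, hdj]
  have hwt' : hammingNorm e' ≤ hammingNorm e₀ - 1 := by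
    have h1 : hammingNorm e' = (Finset.univ.filter (fun j => e' j ≠ 0)).card := rfl
    have h2 : (T.erase ↑t₀).card = T.card - 1 :=
      Finset.card_erase_of_mem (hT'T t₀.2)
    have := Finset.card_le_card hsupp
    omega
  have : sInf S ≤ hammingNorm e' := Nat.sInf_le ⟨e', hHe', rfl⟩
  omega


lemma distTo_TRS_eq {q k : ℕ} (hq : q = Fintype.card F) (hk2 : 2 ≤ k) (hkq : k < q)
    (θ : F) {α : Fin q → F} (hα : Function.Bijective α) (u : Fin q → F) :
    distTo u (TRS α k θ)
      = sInf {d | ∃ e : Fin q → F,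
          (Hmat (q - k) θ α).mulVec e = (Hmat (q - k) θ α).mulVec u ∧ hammingNorm e = d} := by
  unfold distTo
  congr 1
  ext d
  simp only [Set.mem_setOf_eq]
  constructor
  · rintro ⟨c, hc, rfl⟩
    refine ⟨u - c, ?_, (by rw [hammingDist_comm, hammingDist_eq_hammingNorm, neg_add_eq_sub])⟩
    rw [Matrix.mulVec_sub, (mem_TRS_iff hq hk2 hkq θ hα c).mp hc, sub_zero]
  · rintro ⟨e, he, rfl⟩
    refine ⟨u - e, ?_, ?_⟩
    · rw [mem_TRS_iff hq hk2 hkq θ hα, Matrix.mulVec_sub, he, sub_self]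
    · rw [hammingDist_comm, hammingDist_eq_hammingNorm, neg_add_eq_sub, sub_sub_cancel]

lemma distTo_le_r {q k : ℕ} (hq : q = Fintype.card F) (hk2 : 2 ≤ k) (hkq : k < q)
    (θ : F) {α : Fin q → F} (hα : Function.Bijective α) (u : Fin q → F) :
    distTo u (TRS α k θ) ≤ q - k := by
  rw [distTo_TRS_eq hq hk2 hkq θ hα u]
  obtain ⟨e, he, hwt⟩ := exists_small_preimage θ α u
  exact le_trans (Nat.sInf_le ⟨e, he, rfl⟩) hwt

lemma r_le_distTo_iff {q k : ℕ} (hq : q = Fintype.card F) (hk2 : 2 ≤ k) (hkq : k < q)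
    (θ : F) {α : Fin q → F} (hα : Function.Bijective α) (u : Fin q → F) :
    (q - k) ≤ distTo u (TRS α k θ) ↔
      ∀ e : Fin q → F, (Hmat (q - k) θ α).mulVec e = (Hmat (q - k) θ α).mulVec u →
        q - k ≤ hammingNorm e := by
  rw [distTo_TRS_eq hq hk2 hkq θ hα u]
  constructor
  · intro h e he
    exact le_trans h (Nat.sInf_le ⟨e, he, rfl⟩)
  · intro h
    have hne : {d | ∃ e : Fin q → F,
        (Hmat (q - k) θ α).mulVec e = (Hmat (q - k) θ α).mulVec u ∧ hammingNorm e = d}.Nonempty :=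
      ⟨hammingNorm u, u, rfl, rfl⟩
    apply le_csInf hne
    rintro d ⟨e, he, rfl⟩
    exact h e he

lemma syndrome_pow_k {q k : ℕ} (hq : q = Fintype.card F) (hk2 : 2 ≤ k) (hkq : k < q)
    (θ : F) {α : Fin q → F} (hα : Function.Bijective α) (i : Fin (q - k)) :
    (Hmat (q - k) θ α).mulVec (fun j => α j ^ k) i
      = if (i : ℕ) = q - k - 1 then -1 else 0 := by
  have h : (fun j => α j ^ k) = fun j => (Polynomial.X ^ k : Polynomial F).eval (α j) := by
    funext j; simp
  rw [h, syndrome_eval hq hk2 hkq θ hα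
    (p := Polynomial.X ^ k) (by rw [Polynomial.natDegree_X_pow]; omega)]
  by_cases hi : (i : ℕ) = q - k - 1
  · rw [if_pos hi, if_pos hi, Polynomial.coeff_X_pow, Polynomial.coeff_X_pow, if_pos rfl,
      if_neg (show ¬ k - 1 = k by omega)]
    ring
  · rw [if_neg hi, if_neg hi, Polynomial.coeff_X_pow,
      if_neg (show ¬ q - 1 - (i : ℕ) = k by have := i.2; omega), neg_zero]

lemma distTo_pow_k {q k : ℕ} (hq : q = Fintype.card F) (hk2 : 2 ≤ k) (hkq : k < q)
    (θ : F) {α : Fin q → F} (hα : Function.Bijective α) :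
    distTo (fun j => α j ^ k) (TRS α k θ) = q - k := by
  refine le_antisymm (distTo_le_r hq hk2 hkq θ hα _) ?_
  rw [r_le_distTo_iff hq hk2 hkq θ hα]
  intro e he
  by_contra hlt
  push_neg at hlt
  have he0 : e = 0 := by
    apply eq_zero_of_small_support hα.1 (m := q - k - 1) (by omega)
    intro i hi
    have hcoord := congrFun he ⟨i, by omega⟩
    rw [mulVec_Hmat_apply, syndrome_pow_k hq hk2 hkq θ hα,
      if_neg (show ¬ ((⟨i, by omega⟩ : Fin (q - k)) : ℕ) = q - k - 1 by simp only; omega)]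
      at hcoord
    rw [← hcoord]
    exact Finset.sum_congr rfl fun j _ => by
      rw [crv, if_neg (show ¬ ((⟨i, by omega⟩ : Fin (q - k)) : ℕ) = q - k - 1 by
        simp only; omega), mul_comm]
  have hlast := congrFun he ⟨q - k - 1, by omega⟩
  rw [he0, Matrix.mulVec_zero, Pi.zero_apply, syndrome_pow_k hq hk2 hkq θ hα,
    if_pos (show ((⟨q - k - 1, by omega⟩ : Fin (q - k)) : ℕ) = q - k - 1 from rfl)] at hlast
  exact one_ne_zero (α := F) (by linear_combination hlast)

lemma covRad_TRS {q k : ℕ} (hq : q = Fintype.card F) (hk2 : 2 ≤ k) (hkq : k < q)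
    (θ : F) {α : Fin q → F} (hα : Function.Bijective α) :
    covRad (TRS α k θ) = q - k := by
  have hub : ∀ d ∈ {d | ∃ u : Fin q → F, distTo u (TRS α k θ) = d}, d ≤ q - k := by
    rintro d ⟨u, rfl⟩
    exact distTo_le_r hq hk2 hkq θ hα u
  have hmem : (q - k) ∈ {d | ∃ u : Fin q → F, distTo u (TRS α k θ) = d} :=
    ⟨fun j => α j ^ k, distTo_pow_k hq hk2 hkq θ hα⟩
  exact le_antisymm (csSup_le ⟨q - k, hmem⟩ hub) (le_csSup ⟨q - k, hub⟩ hmem)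

end Helpers

/-- For `2 ≤ k < q` and `r = q - k`, `u ∈ 𝔽_q^q` is a deep hole of
`TRS_k(𝔽_q, θ)` iff for all pairwise distinct `β_1, …, β_{r-1} ∈ 𝔽_q`, the `r` vectors
`c_{r,θ}(β_1), …, c_{r,θ}(β_{r-1}), H·uᵀ` are linearly independent over `𝔽_q`. -/
theorem isDeepHole_iff_linearIndependent {F : Type*} [Field F] [Fintype F] [DecidableEq F]
    (q : ℕ) (hq : q = Fintype.card F) (k : ℕ) (hk2 : 2 ≤ k) (hkq : k < q)
    (θ : F) (hθ : θ ≠ 0) (α : Fin q → F) (hα : Function.Bijective α) (u : Fin q → F) :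
    IsDeepHole (TRS α k θ) u ↔
      ∀ β : Fin (q - k - 1) → F, Function.Injective β →
        LinearIndependent F
          (Sum.elim (fun i : Fin (q - k - 1) => crv F (q - k) θ (β i))
            (fun _ : Unit => (Hmat (q - k) θ α).mulVec u)) := by
  classical
  have hr1 : 1 ≤ q - k := by omega
  set σ : Fin q ≃ F := Equiv.ofBijective α hα with hσ
  have hσα : ∀ a : F, α (σ.symm a) = a := fun a => σ.apply_symm_apply a
  rw [IsDeepHole, covRad_TRS hq hk2 hkq θ hα]
  have hle := distTo_le_r hq hk2 hkq θ hα u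
  have hiff : distTo u (TRS α k θ) = q - k ↔ q - k ≤ distTo u (TRS α k θ) :=
    ⟨fun h => h.ge, fun h => le_antisymm hle h⟩
  rw [hiff, r_le_distTo_iff hq hk2 hkq θ hα u]
  constructor
  · -- every preimage is heavy → linear independence
    intro hkey β hβ
    refine Fintype.linearIndependent_iff.mpr ?_
    intro g hg
    rw [Fintype.sum_sum_type] at hg
    simp only [Sum.elim_inl, Sum.elim_inr, Finset.univ_unique, Finset.sum_singleton] at hg
    by_cases hc0 : g (Sum.inr default) = 0
    · rw [hc0, zero_smul, add_zero] at hg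
      have hginl : (fun t => g (Sum.inl t)) = 0 := by
        apply vand_zero hβ
        intro i
        have hco := congrFun hg ⟨(i : ℕ), by have := i.2; omega⟩
        rw [Finset.sum_apply, Pi.zero_apply] at hco
        rw [← hco]
        refine Finset.sum_congr rfl fun t _ => ?_
        rw [Pi.smul_apply, smul_eq_mul, crv,
          if_neg (show ¬ ((⟨(i : ℕ), by have := i.2; omega⟩ : Fin (q - k)) : ℕ) = q - k - 1 by
            simp only; have := i.2; omega)]
      intro x
      rcases x with t | u'
      · exact congrFun hginl t
      · cases u'; exact hc0
    · exfalso
      set c := g (Sum.inr default) with hcdef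
      set e : Fin q → F :=
        fun j => if h : ∃ i, β i = α j then -(g (Sum.inl h.choose)) / c else 0 with hedef
      have heβ : ∀ i, e (σ.symm (β i)) = -(g (Sum.inl i)) / c := by
        intro i
        have hex : ∃ i', β i' = α (σ.symm (β i)) := ⟨i, by rw [hσα]⟩
        have hch : hex.choose = i := hβ (by rw [hex.choose_spec, hσα])
        simp only [hedef]
        rw [dif_pos hex, hch]
      have hHe : (Hmat (q - k) θ α).mulVec e = (Hmat (q - k) θ α).mulVec u := by
        have heq : (∑ i, g (Sum.inl i) • crv F (q - k) θ (β i))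
            = -(c • (Hmat (q - k) θ α).mulVec u) := eq_neg_of_add_eq_zero_left hg
        rw [mulVec_Hmat_eq_sum]
        calc ∑ j, e j • crv F (q - k) θ (α j)
            = ∑ a : F, e (σ.symm a) • crv F (q - k) θ a := by
              rw [← Equiv.sum_comp σ (fun a => e (σ.symm a) • crv F (q - k) θ a)]
              refine Finset.sum_congr rfl fun j _ => ?_
              rw [Equiv.symm_apply_apply]
              rfl
          _ = ∑ a ∈ Finset.image β Finset.univ, e (σ.symm a) • crv F (q - k) θ a := by
              symm
              apply Finset.sum_subset (Finset.subset_univ _)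
              intro a _ ha
              have h0 : e (σ.symm a) = 0 := by
                simp only [hedef]
                rw [dif_neg]
                rintro ⟨i, hi⟩
                rw [hσα] at hi
                exact ha (Finset.mem_image.mpr ⟨i, Finset.mem_univ i, hi⟩)
              rw [h0, zero_smul]
          _ = ∑ i, e (σ.symm (β i)) • crv F (q - k) θ (β i) :=
              Finset.sum_image fun i _ j _ h => hβ h
          _ = ∑ i, (-(g (Sum.inl i)) / c) • crv F (q - k) θ (β i) :=
              Finset.sum_congr rfl fun i _ => by rw [heβ i]
          _ = (-c⁻¹) • ∑ i, g (Sum.inl i) • crv F (q - k) θ (β i) := by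
              rw [Finset.smul_sum]
              refine Finset.sum_congr rfl fun i _ => ?_
              rw [smul_smul]
              congr 1
              rw [div_eq_mul_inv]
              ring
          _ = (Hmat (q - k) θ α).mulVec u := by
              rw [heq, neg_smul_neg, smul_smul, inv_mul_cancel₀ hc0, one_smul]
      have hwt : hammingNorm e ≤ q - k - 1 := by
        have hsub : Finset.univ.filter (fun j => e j ≠ 0)
            ⊆ Finset.image (fun i => σ.symm (β i)) Finset.univ := by
          intro j hj
          rw [Finset.mem_filter] at hj
          rcases hjx : (show ∃ i, β i = α j from by
            by_contra hnex
            exact hj.2 (by simp only [hedef]; rw [dif_neg hnex])) with ⟨i, hi⟩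
          have : σ.symm (β i) = j := by
            rw [hi]
            exact σ.symm_apply_apply j
          exact Finset.mem_image.mpr ⟨i, Finset.mem_univ i, this⟩
        have h1 : hammingNorm e = (Finset.univ.filter (fun j => e j ≠ 0)).card := rfl
        have h2 := Finset.card_le_card hsub
        have h3 := Finset.card_image_le (f := fun i => σ.symm (β i)) (s := Finset.univ)
        rw [Finset.card_univ, Fintype.card_fin] at h3
        omega
      have := hkey e hHe
      omega
  · -- linear independence → every preimage is heavy
    intro hind e hee
    by_contra hlt
    push_neg at hlt
    set T' : Finset F := (Finset.univ.filter (fun j => e j ≠ 0)).image α with hT'def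
    have hT'card : T'.card ≤ q - k - 1 := by
      have h1 : T'.card ≤ (Finset.univ.filter (fun j => e j ≠ 0)).card := by
        rw [hT'def]; exact Finset.card_image_le
      have h2 : (Finset.univ.filter (fun j => e j ≠ 0)).card = hammingNorm e := rfl
      omega
    obtain ⟨S, hT'S, -, hScard⟩ :=
      Finset.exists_subsuperset_card_eq (Finset.subset_univ T') hT'card
        (by rw [Finset.card_univ, ← hq]; omega)
    have hcS : Fintype.card ↑S = q - k - 1 := by rw [Fintype.card_coe, hScard]
    set ε : ↑S ≃ Fin (q - k - 1) := Fintype.equivFinOfCardEq hcS with hε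
    set β : Fin (q - k - 1) → F := fun i => ↑(ε.symm i) with hβdef
    have hβ : Function.Injective β :=
      fun i j h => ε.symm.injective (Subtype.val_injective h)
    have hli := Fintype.linearIndependent_iff.mp (hind β hβ)
    set g : Fin (q - k - 1) ⊕ Unit → F :=
      Sum.elim (fun i => e (σ.symm (β i))) (fun _ => -1) with hgdef
    have hHu : (Hmat (q - k) θ α).mulVec u = ∑ i, e (σ.symm (β i)) • crv F (q - k) θ (β i) := by
      rw [← hee, mulVec_Hmat_eq_sum]
      calc ∑ j, e j • crv F (q - k) θ (α j)
          = ∑ a : F, e (σ.symm a) • crv F (q - k) θ a := by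
            rw [← Equiv.sum_comp σ (fun a => e (σ.symm a) • crv F (q - k) θ a)]
            refine Finset.sum_congr rfl fun j _ => ?_
            rw [Equiv.symm_apply_apply]
            rfl
        _ = ∑ a ∈ S, e (σ.symm a) • crv F (q - k) θ a := by
            symm
            apply Finset.sum_subset (Finset.subset_univ _)
            intro a _ haS
            have h0 : e (σ.symm a) = 0 := by
              by_contra hc
              apply haS
              apply hT'S
              refine Finset.mem_image.mpr ⟨σ.symm a, ?_, hσα a⟩
              exact Finset.mem_filter.mpr ⟨Finset.mem_univ _, hc⟩
            rw [h0, zero_smul]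
        _ = ∑ x : ↑S, e (σ.symm ↑x) • crv F (q - k) θ ↑x :=
            (Finset.sum_coe_sort S _).symm
        _ = ∑ i, e (σ.symm (β i)) • crv F (q - k) θ (β i) :=
            (Equiv.sum_comp ε.symm (fun x : ↑S => e (σ.symm ↑x) • crv F (q - k) θ ↑x)).symm
    have hzero : ∑ x, g x • Sum.elim (fun i : Fin (q - k - 1) => crv F (q - k) θ (β i))
        (fun _ : Unit => (Hmat (q - k) θ α).mulVec u) x = 0 := by
      rw [Fintype.sum_sum_type]
      simp only [Sum.elim_inl, Sum.elim_inr, Finset.univ_unique, Finset.sum_singleton, hgdef]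
      rw [hHu, neg_one_smul]
      exact add_neg_cancel _
    have hcontr := hli g hzero (Sum.inr default)
    rw [hgdef] at hcontr
    simp only [Sum.elim_inr] at hcontr
    exact one_ne_zero (α := F) (by linear_combination -hcontr)
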